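/- Let C and D be nonnegative d1×d2 matrices with C_{ij} = 0 iff D_{ij} = 0, ∑_i C_{ij} = 1 for all j, ∑_j D_{ij} = 1 for all i, and suppose the common support S = {(i,j) : C_{ij} > 0} is 'connected' in the sense that the bipartite graph on [d1] ⊔ [d2] with edge set S is connected. If C and D satisfy all circuit binomial equations ∏_{t=1}^r C_{i_t j_t} D_{i_{t+1} j_t} = ∏_{t=1}^r D_{i_t j_t} C_{i_{t+1} j_t} for every circuit (i_1,j_1,...,i_r,j_r,i_1) of the support graph, then there exist positive reals u_i (i such that row i of D is nonzero), v_j, and nonnegative P_{ij} with C_{ij} = P_{ij} v_j and D_{ij} = P_{ij} u_i for all (i,j); hence C and D are compatible conditionals. -/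

import Mathlib

set_option autoImplicit false
set_option maxHeartbeats 1000000

/-- The bipartite support graph of a matrix `C`: left vertices `Fin d1`, right vertices
`Fin d2`, with an edge between `i` and `j` whenever `C i j > 0`. -/
def supportGraph {d1 d2 : ℕ} (C : Fin d1 → Fin d2 → ℝ) :
    SimpleGraph (Fin d1 ⊕ Fin d2) where
  Adj x y := ∃ i j, 0 < C i j ∧
    ((x = Sum.inl i ∧ y = Sum.inr j) ∨ (x = Sum.inr j ∧ y = Sum.inl i))
  symm := by
    constructor
    rintro x y ⟨i, j, hpos, (⟨hx, hy⟩ | ⟨hx, hy⟩)⟩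
    · exact ⟨i, j, hpos, Or.inr ⟨hy, hx⟩⟩
    · exact ⟨i, j, hpos, Or.inl ⟨hy, hx⟩⟩
  loopless := by
    constructor
    rintro x ⟨i, j, hpos, (⟨hx, hy⟩ | ⟨hx, hy⟩)⟩ <;> simp_all

namespace CircAux
open SimpleGraph

lemma nodupinj {α β : Type*} : ∀ (r : ℕ) (I : ℕ → α) (J : ℕ → β),
    ((List.range r).flatMap (fun t => [Sum.inl (I t), Sum.inr (J t)])).Nodup →
    (∀ s < r, ∀ t < r, I s = I t → s = t) ∧ (∀ s < r, ∀ t < r, J s = J t → s = t) := by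
  intro r
  induction r with
  | zero => intro I J _; constructor <;> intro s hs <;> omega
  | succ r ih =>
    intro I J hnd
    rw [List.range_succ, List.flatMap_append, List.nodup_append] at hnd
    obtain ⟨h1, _, hdisj⟩ := hnd
    obtain ⟨ihI, ihJ⟩ := ih I J h1
    have hInotin : ∀ t < r, I r ≠ I t := by
      intro t ht he
      exact hdisj (Sum.inl (I r))
        (List.mem_flatMap.2 ⟨t, List.mem_range.2 ht, by simp [he]⟩) _ (by simp) rfl
    have hJnotin : ∀ t < r, J r ≠ J t := by
      intro t ht he
      exact hdisj (Sum.inr (J r))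
        (List.mem_flatMap.2 ⟨t, List.mem_range.2 ht, by simp [he]⟩) _ (by simp) rfl
    constructor
    · intro s hs t ht he
      rcases Nat.lt_succ_iff_lt_or_eq.1 hs with hs' | rfl
      · rcases Nat.lt_succ_iff_lt_or_eq.1 ht with ht' | rfl
        · exact ihI s hs' t ht' he
        · exact absurd he.symm (hInotin s hs')
      · rcases Nat.lt_succ_iff_lt_or_eq.1 ht with ht' | rfl
        · exact absurd he (hInotin t ht')
        · rfl
    · intro s hs t ht he
      rcases Nat.lt_succ_iff_lt_or_eq.1 hs with hs' | rfl
      · rcases Nat.lt_succ_iff_lt_or_eq.1 ht with ht' | rfl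
        · exact ihJ s hs' t ht' he
        · exact absurd he.symm (hJnotin s hs')
      · rcases Nat.lt_succ_iff_lt_or_eq.1 ht with ht' | rfl
        · exact absurd he (hJnotin t ht')
        · rfl

variable {d1 d2 : ℕ} {C D : Fin d1 → Fin d2 → ℝ}

/-- The multiplicative gain of an edge of the support graph. -/
noncomputable def gaux (C D : Fin d1 → Fin d2 → ℝ) (x y : Fin d1 ⊕ Fin d2) : ℝ :=
  match x, y with
  | .inl i, .inr j => C i j / D i j
  | .inr j, .inl i => D i j / C i j
  | _, _ => 1

/-- The multiplicative gain of a walk in the support graph. -/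
noncomputable def phi (C D : Fin d1 → Fin d2 → ℝ) {x y : Fin d1 ⊕ Fin d2}
    (p : (supportGraph C).Walk x y) : ℝ :=
  (p.darts.map (fun d => gaux C D d.fst d.snd)).prod

@[simp] lemma phi_nil {x : Fin d1 ⊕ Fin d2} :
    phi C D (.nil : (supportGraph C).Walk x x) = 1 := rfl

@[simp] lemma phi_cons {x y z : Fin d1 ⊕ Fin d2} (h : (supportGraph C).Adj x y)
    (p : (supportGraph C).Walk y z) : phi C D (.cons h p) = gaux C D x y * phi C D p := rfl

@[simp] lemma phi_append {x y z : Fin d1 ⊕ Fin d2} (p : (supportGraph C).Walk x y)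
    (q : (supportGraph C).Walk y z) : phi C D (p.append q) = phi C D p * phi C D q := by
  simp [phi, SimpleGraph.Walk.darts_append]

lemma adj_inl {a : Fin d1} {y : Fin d1 ⊕ Fin d2} (h : (supportGraph C).Adj (Sum.inl a) y) :
    ∃ j, y = Sum.inr j ∧ 0 < C a j := by
  obtain ⟨i, j, hpos, (⟨hx, hy⟩ | ⟨hx, hy⟩)⟩ := h
  · exact ⟨j, hy, by cases hx; exact hpos⟩
  · exact absurd hx (by simp)

lemma adj_inr {b : Fin d2} {y : Fin d1 ⊕ Fin d2} (h : (supportGraph C).Adj (Sum.inr b) y) :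
    ∃ i, y = Sum.inl i ∧ 0 < C i b := by
  obtain ⟨i, j, hpos, (⟨hx, hy⟩ | ⟨hx, hy⟩)⟩ := h
  · exact absurd hx (by simp)
  · exact ⟨i, hy, by cases hx; exact hpos⟩

variable (hD : ∀ i j, 0 ≤ D i j) (hsupp : ∀ i j, C i j = 0 ↔ D i j = 0)

include hD hsupp in
lemma Dpos {i : Fin d1} {j : Fin d2} (h : 0 < C i j) : 0 < D i j := by
  rcases lt_or_eq_of_le (hD i j) with h' | h'
  · exact h'
  · exact absurd ((hsupp i j).mpr h'.symm) (ne_of_gt h)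

include hD hsupp in
lemma gaux_pos {x y : Fin d1 ⊕ Fin d2} (h : (supportGraph C).Adj x y) :
    0 < gaux C D x y := by
  obtain ⟨i, j, hpos, (⟨hx, hy⟩ | ⟨hx, hy⟩)⟩ := h <;> subst hx <;> subst hy <;>
    · have h2 := Dpos hD hsupp hpos
      simp only [gaux]
      positivity

include hD hsupp in
lemma gaux_mul_symm {x y : Fin d1 ⊕ Fin d2} (h : (supportGraph C).Adj x y) :
    gaux C D x y * gaux C D y x = 1 := by
  obtain ⟨i, j, hpos, (⟨hx, hy⟩ | ⟨hx, hy⟩)⟩ := h <;> subst hx <;> subst hy <;>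
    · have h2 := Dpos hD hsupp hpos
      simp only [gaux]
      field_simp

include hD hsupp in
lemma phi_pos {x y : Fin d1 ⊕ Fin d2} (p : (supportGraph C).Walk x y) : 0 < phi C D p := by
  induction p with
  | nil => simp
  | cons h p ih => exact mul_pos (gaux_pos hD hsupp h) ih

include hD hsupp in
lemma phi_reverse_mul {x y : Fin d1 ⊕ Fin d2} (p : (supportGraph C).Walk x y) :
    phi C D p.reverse * phi C D p = 1 := by
  induction p with
  | nil => simp
  | cons h p ih =>
    rw [SimpleGraph.Walk.reverse_cons]
    simp only [phi_append, phi_cons, phi_nil]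
    have := gaux_mul_symm hD hsupp h
    nlinarith [ih]

lemma phi_rotate {x c : Fin d1 ⊕ Fin d2} (p : (supportGraph C).Walk x x)
    (h : c ∈ p.support) : phi C D (p.rotate c h) = phi C D p := by
  conv_rhs => rw [← p.take_spec h]
  rw [SimpleGraph.Walk.rotate, phi_append, phi_append, mul_comm]

lemma extract (hd2 : 0 < d2) : ∀ (n : ℕ) {a b : Fin d1}
    (p : (supportGraph C).Walk (Sum.inl a) (Sum.inl b)), p.length = n →
    ∃ (r : ℕ) (I : ℕ → Fin d1) (J : ℕ → Fin d2),
      p.length = 2 * r ∧ I 0 = a ∧ I r = b ∧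
      (∀ t < r, 0 < C (I t) (J t) ∧ 0 < C (I (t+1)) (J t)) ∧
      p.support = (List.range r).flatMap
          (fun t => [Sum.inl (I t), Sum.inr (J t)]) ++ [Sum.inl b] ∧
      phi C D p = ∏ t ∈ Finset.range r,
        (gaux C D (Sum.inl (I t)) (Sum.inr (J t)) *
          gaux C D (Sum.inr (J t)) (Sum.inl (I (t+1)))) := by
  intro n
  induction n using Nat.strong_induction_on with
  | _ n ih =>
  intro a b p hlen
  cases p with
  | nil =>
    exact ⟨0, fun _ => a, fun _ => ⟨0, hd2⟩, by simp, rfl, rfl, by omega, by simp, by simp⟩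
  | cons h q =>
    obtain ⟨j0, rfl, hCpos⟩ := adj_inl h
    cases q with
    | cons h2 q2 =>
      obtain ⟨a1, rfl, hCpos2⟩ := adj_inr h2
      have hlen2 : q2.length = n - 2 := by simp at hlen; omega
      have hlt : n - 2 < n := by simp at hlen; omega
      obtain ⟨r, I, J, hl, hI0, hIr, hpos, hsup, hphi⟩ := ih (n - 2) hlt q2 hlen2
      refine ⟨r + 1, fun t => if t = 0 then a else I (t - 1),
        fun t => if t = 0 then j0 else J (t - 1), ?_, by simp, ?_, ?_, ?_, ?_⟩
      · simp; omega
      · simp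
        exact hIr
      · intro t ht
        cases t with
        | zero => simpa using ⟨hCpos, by rwa [hI0]⟩
        | succ s =>
          simp only [Nat.succ_ne_zero, if_neg, Nat.add_sub_cancel, reduceIte,
            Nat.succ_sub_one]
          exact hpos s (by omega)
      · rw [Walk.support_cons, Walk.support_cons, hsup, List.range_succ_eq_map,
          List.flatMap_cons, List.flatMap_map]
        simp only [if_pos, Function.comp]
        congr 2
      · rw [phi_cons, phi_cons, hphi, Finset.prod_range_succ']
        simp only [Nat.succ_ne_zero, if_neg, Nat.add_sub_cancel, reduceIte, Nat.succ_sub_one,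
          if_pos]
        rw [hI0]
        ring

section
variable (hcirc : ∀ (r : ℕ), 2 ≤ r → ∀ (i : ℕ → Fin d1) (j : ℕ → Fin d2),
      (∀ s < r, ∀ t < r, i s = i t → s = t) →
      (∀ s < r, ∀ t < r, j s = j t → s = t) →
      (∀ t < r, 0 < C (i t) (j t) ∧ 0 < C (i ((t + 1) % r)) (j t)) →
      ∏ t ∈ Finset.range r, (C (i t) (j t) * D (i ((t + 1) % r)) (j t))
        = ∏ t ∈ Finset.range r, (D (i t) (j t) * C (i ((t + 1) % r)) (j t)))

include hD hsupp hcirc in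
lemma phi_cycle_inl (hd2 : 0 < d2) {a : Fin d1}
    (p : (supportGraph C).Walk (Sum.inl a) (Sum.inl a))
    (hnd : p.support.tail.Nodup) : phi C D p = 1 := by
  obtain ⟨r, I, J, hl, hI0, hIr, hpos, hsup, hphi⟩ := extract hd2 p.length p rfl
  rcases Nat.eq_zero_or_pos r with rfl | hr
  · simpa using hphi
  -- get nodup of the flatMap list
  have hmem : Sum.inl (I 0) ∈ (List.range r).flatMap
      (fun t => [Sum.inl (I t), Sum.inr (J t)]) :=
    List.mem_flatMap.2 ⟨0, List.mem_range.2 hr, by simp⟩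
  obtain ⟨x, L, hxL⟩ := List.exists_cons_of_ne_nil (List.ne_nil_of_mem hmem)
  have h1 : Sum.inl a :: p.support.tail = x :: (L ++ [Sum.inl a]) := by
    rw [← p.support_eq_cons, hsup, hxL, List.cons_append]
  have hx : Sum.inl a = x := by injection h1
  have htl : p.support.tail = L ++ [Sum.inl a] := by injection h1
  have hndL : (L ++ [Sum.inl a]).Nodup := htl ▸ hnd
  rw [List.nodup_append] at hndL
  obtain ⟨hL, -, hdisjL⟩ := hndL
  have hnotin : Sum.inl a ∉ L := fun hm => hdisjL _ hm _ (by simp) rfl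
  have hFMnd : ((List.range r).flatMap
      (fun t => [Sum.inl (I t), Sum.inr (J t)])).Nodup := by
    rw [hxL, List.nodup_cons, ← hx]
    exact ⟨hnotin, hL⟩
  obtain ⟨hIinj, hJinj⟩ := nodupinj r I J hFMnd
  have hIwrap : ∀ t < r, I ((t + 1) % r) = I (t + 1) := by
    intro t ht
    rcases Nat.lt_or_ge (t + 1) r with hlt' | hge
    · rw [Nat.mod_eq_of_lt hlt']
    · have he : t + 1 = r := by omega
      rw [he, Nat.mod_self, hI0, hIr]
  rcases eq_or_lt_of_le (Nat.succ_le_of_lt hr) with hr1 | hr2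
  · -- r = 1
    have hreq : r = 1 := by omega
    subst hreq
    rw [hphi, Finset.prod_range_one]
    have hIe : I 1 = I 0 := by rw [hI0, hIr]
    rw [hIe]
    have hadj : (supportGraph C).Adj (Sum.inl (I 0)) (Sum.inr (J 0)) :=
      ⟨I 0, J 0, (hpos 0 (by omega)).1, Or.inl ⟨rfl, rfl⟩⟩
    exact gaux_mul_symm hD hsupp hadj
  · -- r ≥ 2
    have hpos' : ∀ t < r, 0 < C (I t) (J t) ∧ 0 < C (I ((t + 1) % r)) (J t) := by
      intro t ht
      rw [hIwrap t ht]
      exact hpos t ht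
    have key := hcirc r hr2 I J hIinj hJinj hpos'
    rw [hphi]
    have hfac : ∀ t ∈ Finset.range r,
        gaux C D (Sum.inl (I t)) (Sum.inr (J t)) *
          gaux C D (Sum.inr (J t)) (Sum.inl (I (t+1)))
        = (C (I t) (J t) * D (I ((t + 1) % r)) (J t))
          / (D (I t) (J t) * C (I ((t + 1) % r)) (J t)) := by
      intro t ht
      rw [← hIwrap t (Finset.mem_range.1 ht)]
      show C (I t) (J t) / D (I t) (J t) *
        (D (I ((t+1) % r)) (J t) / C (I ((t+1) % r)) (J t)) = _
      rw [div_mul_div_comm]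
    rw [Finset.prod_congr rfl hfac, Finset.prod_div_distrib, key, div_self]
    apply ne_of_gt
    apply Finset.prod_pos
    intro t ht
    have ht' := Finset.mem_range.1 ht
    exact mul_pos (Dpos hD hsupp (hpos' t ht').1) (hpos' t ht').2

include hD hsupp hcirc in
lemma phi_cycle_inr (hd2 : 0 < d2) {b : Fin d2}
    (p : (supportGraph C).Walk (Sum.inr b) (Sum.inr b))
    (hnd : p.support.tail.Nodup) : phi C D p = 1 := by
  cases p with
  | nil => simp
  | cons h q =>
    obtain ⟨a1, rfl, -⟩ := adj_inr h
    have hq : q.support.Nodup := by rwa [Walk.support_cons, List.tail_cons] at hnd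
    have hphi' : phi C D (q.append (Walk.cons h Walk.nil)) = phi C D (Walk.cons h q) := by
      rw [phi_append, phi_cons, phi_cons, phi_nil]
      ring
    rw [← hphi']
    apply phi_cycle_inl hD hsupp hcirc hd2
    have hsup' : (q.append (Walk.cons h Walk.nil)).support
        = q.support ++ [Sum.inl a1] := by
      rw [Walk.support_append]
      rfl
    have hqc : q.support = Sum.inl a1 :: q.support.tail := q.support_eq_cons
    rw [hsup', hqc, List.cons_append, List.tail_cons]
    rw [hqc, List.nodup_cons] at hq
    rw [List.nodup_append]
    exact ⟨hq.2, List.nodup_singleton _, fun y hy => by simp; rintro rfl; exact hq.1 hy⟩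

include hD hsupp hcirc in
lemma phi_closed (hd2 : 0 < d2) : ∀ (n : ℕ) {x : Fin d1 ⊕ Fin d2}
    (p : (supportGraph C).Walk x x), p.length = n → phi C D p = 1 := by
  letI : BEq (Fin d1 ⊕ Fin d2) := instBEqOfDecidableEq
  intro n
  induction n using Nat.strong_induction_on with
  | _ n ih =>
  intro x p hlen
  by_cases hnd : p.support.tail.Nodup
  · cases x with
    | inl a => exact phi_cycle_inl hD hsupp hcirc hd2 p hnd
    | inr b => exact phi_cycle_inr hD hsupp hcirc hd2 p hnd
  · obtain ⟨c, hdup⟩ := List.exists_duplicate_iff_not_nodup.2 hnd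
    have hctail : c ∈ p.support.tail := hdup.mem
    have hcmem : c ∈ p.support := by
      rw [p.support_eq_cons]; exact List.mem_cons_of_mem _ hctail
    have main : ∀ (w : (supportGraph C).Walk c c), w.length = n →
        List.Duplicate c w.support.tail → phi C D w = 1 := by
      intro w hwl hdupw
      cases w with
      | nil => exact absurd hdupw.mem (by simp)
      | cons h q =>
        rw [Walk.support_cons, List.tail_cons] at hdupw
        have hcnt := List.duplicate_iff_two_le_count.1 hdupw
        have hcmem2 : c ∈ q.support := hdupw.mem
        have hspec := q.take_spec hcmem2
        have hc1 := q.count_support_takeUntil_eq_one hcmem2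
        have hsupeq : q.support = (q.takeUntil c hcmem2).support
            ++ (q.dropUntil c hcmem2).support.tail := by
          conv_lhs => rw [← hspec]
          rw [Walk.support_append]
        rw [hsupeq, List.count_append, hc1] at hcnt
        have hmemtail : c ∈ (q.dropUntil c hcmem2).support.tail := by
          by_contra h'
          rw [List.count_eq_zero_of_not_mem h'] at hcnt
          omega
        have hq2len : 1 ≤ (q.dropUntil c hcmem2).length := by
          have h5 : (q.dropUntil c hcmem2).support.tail ≠ [] := List.ne_nil_of_mem hmemtail
          have h6 := Walk.length_support (q.dropUntil c hcmem2)
          have h7 : 0 < (q.dropUntil c hcmem2).support.tail.length := List.length_pos_iff.2 h5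
          rw [List.length_tail, h6] at h7
          omega
        have hlensum : (q.takeUntil c hcmem2).length + (q.dropUntil c hcmem2).length + 1
            = n := by
          have h6 := congrArg Walk.length hspec
          rw [Walk.length_append] at h6
          have h7 : (Walk.cons h q).length = q.length + 1 := Walk.length_cons h q
          omega
        have e1 := ih ((q.takeUntil c hcmem2).length + 1) (by omega)
          (Walk.cons h (q.takeUntil c hcmem2)) (Walk.length_cons _ _)
        have e2 := ih ((q.dropUntil c hcmem2).length) (by omega)
          (q.dropUntil c hcmem2) rfl
        have hsplit : phi C D (Walk.cons h q)
            = phi C D (Walk.cons h (q.takeUntil c hcmem2))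
              * phi C D (q.dropUntil c hcmem2) := by
          conv_lhs => rw [← hspec]
          rw [phi_cons, phi_append, phi_cons, mul_assoc]
        rw [hsplit, e1, e2, mul_one]
    have hrot := phi_rotate (D := D) p hcmem
    rw [← hrot]
    apply main (p.rotate c hcmem)
    · have h8 := congrArg Walk.length (p.take_spec hcmem)
      rw [Walk.length_append] at h8
      rw [Walk.rotate, Walk.length_append]
      omega
    · have hcount := List.duplicate_iff_two_le_count.1 hdup
      apply List.duplicate_iff_two_le_count.2
      have hperm := (p.support_rotate c hcmem).perm
      rw [hperm.count_eq]
      exact hcount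

end
end CircAux

/-- sufficiency of the circuit binomial conditions.  If `C`, `D` are
nonnegative conditional arrays with common support, normalized column sums (for `C`) and row
sums (for `D`), whose support graph is connected, and which satisfy every circuit binomial
equation of the support graph, then `C` and `D` admit the Lawrence-lifting parametrization
`C i j = P i j * v j`, `D i j = P i j * u i` with `u, v` positive and `P` nonnegative; hence
they are compatible conditionals. -/
theorem circuit_conditions_sufficient (d1 d2 : ℕ)
    (C D : Fin d1 → Fin d2 → ℝ)
    (hC : ∀ i j, 0 ≤ C i j) (hD : ∀ i j, 0 ≤ D i j)
    (hsupp : ∀ i j, C i j = 0 ↔ D i j = 0)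
    (hCsum : ∀ j, ∑ i, C i j = 1) (hDsum : ∀ i, ∑ j, D i j = 1)
    (hconn : (supportGraph C).Connected)
    (hcirc : ∀ (r : ℕ), 2 ≤ r → ∀ (i : ℕ → Fin d1) (j : ℕ → Fin d2),
      (∀ s < r, ∀ t < r, i s = i t → s = t) →
      (∀ s < r, ∀ t < r, j s = j t → s = t) →
      (∀ t < r, 0 < C (i t) (j t) ∧ 0 < C (i ((t + 1) % r)) (j t)) →
      ∏ t ∈ Finset.range r, (C (i t) (j t) * D (i ((t + 1) % r)) (j t))
        = ∏ t ∈ Finset.range r, (D (i t) (j t) * C (i ((t + 1) % r)) (j t))) :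
    ∃ (P : Fin d1 → Fin d2 → ℝ) (u : Fin d1 → ℝ) (v : Fin d2 → ℝ),
      (∀ i, 0 < u i) ∧ (∀ j, 0 < v j) ∧ (∀ i j, 0 ≤ P i j) ∧
      (∀ i j, C i j = P i j * v j) ∧ (∀ i j, D i j = P i j * u i) := by
  classical
  have hd2 : 0 < d2 := by
    rcases Nat.eq_zero_or_pos d2 with h2 | h2
    · obtain (i | j) := hconn.nonempty.some
      · have h3 := hDsum i
        subst h2
        simp at h3
      · exact absurd j.2 (by omega)
    · exact h2
  have hd1 : 0 < d1 := by
    rcases Nat.eq_zero_or_pos d1 with h1 | h1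
    · have h3 := hCsum ⟨0, hd2⟩
      subst h1
      simp at h3
    · exact h1
  set v0 : Fin d1 ⊕ Fin d2 := Sum.inl ⟨0, hd1⟩ with hv0
  have hreach : ∀ x, Nonempty ((supportGraph C).Walk v0 x) :=
    fun x => hconn.preconnected v0 x
  set F : (Fin d1 ⊕ Fin d2) → ℝ := fun x => CircAux.phi C D (hreach x).some with hF
  have hFpos : ∀ x, 0 < F x := fun x => CircAux.phi_pos hD hsupp _
  have hclosed := CircAux.phi_closed hD hsupp hcirc hd2
  have huniq : ∀ (x : Fin d1 ⊕ Fin d2) (p : (supportGraph C).Walk v0 x),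
      CircAux.phi C D p = F x := by
    intro x p
    have h1 : CircAux.phi C D (p.append ((hreach x).some).reverse) = 1 := hclosed _ _ rfl
    rw [CircAux.phi_append] at h1
    have h2 := CircAux.phi_reverse_mul hD hsupp ((hreach x).some)
    have h3 := CircAux.phi_pos (C := C) (D := D) hD hsupp ((hreach x).some).reverse
    have h4 : CircAux.phi C D p * CircAux.phi C D ((hreach x).some).reverse
        = F x * CircAux.phi C D ((hreach x).some).reverse := by
      rw [h1, hF]
      simp only
      rw [mul_comm] at h2
      rw [h2]
    exact mul_right_cancel₀ (ne_of_gt h3) h4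
  have hedge : ∀ x y (h : (supportGraph C).Adj x y), F y = F x * CircAux.gaux C D x y := by
    intro x y h
    have h5 := huniq y (((hreach x).some).append (SimpleGraph.Walk.cons h SimpleGraph.Walk.nil))
    rw [CircAux.phi_append, CircAux.phi_cons, CircAux.phi_nil, mul_one] at h5
    have hx : CircAux.phi C D (hreach x).some = F x := rfl
    rw [hx] at h5
    exact h5.symm
  refine ⟨fun i j => C i j / F (Sum.inr j), fun i => F (Sum.inl i), fun j => F (Sum.inr j),
    fun i => hFpos _, fun j => hFpos _, fun i j => div_nonneg (hC i j) (hFpos _).le,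
    fun i j => (div_mul_cancel₀ _ (ne_of_gt (hFpos (Sum.inr j)))).symm, ?_⟩
  intro i j
  rcases eq_or_lt_of_le (hC i j) with h0 | hpos
  · show D i j = C i j / F (Sum.inr j) * F (Sum.inl i)
    rw [(hsupp i j).1 h0.symm, ← h0]
    simp
  · have hadj : (supportGraph C).Adj (Sum.inl i) (Sum.inr j) := ⟨i, j, hpos, Or.inl ⟨rfl, rfl⟩⟩
    have he := hedge _ _ hadj
    have hg : CircAux.gaux C D (Sum.inl i) (Sum.inr j) = C i j / D i j := rfl
    have hDp : 0 < D i j := CircAux.Dpos hD hsupp hpos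
    rw [hg] at he
    show D i j = C i j / F (Sum.inr j) * F (Sum.inl i)
    rw [he]
    have h9 : F (Sum.inl i) ≠ 0 := ne_of_gt (hFpos _)
    have hC0 : C i j ≠ 0 := ne_of_gt hpos
    have hD0 : D i j ≠ 0 := ne_of_gt hDp
    field_simp
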